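/- Let ℓ ≥ 2, k₁ ≥ 1 and k₂ ≥ 0 be integers and n ≥ ℓk₁ + k₂ − 1. Then the graph K_{ℓk₁+k₂−1} ∨ K̄_{n−ℓk₁−k₂+1} contains no subgraph isomorphic to k₁P_{2ℓ} ∪ k₂S_{2ℓ−1}. -/

import Mathlib

open SimpleGraph

/-- The number of edges of a simple graph. -/
noncomputable def edgeCount {V : Type*} (G : SimpleGraph V) : ℕ :=
  Nat.card G.edgeSet

/-- `Contains G H` means `G` contains a subgraph isomorphic to `H`,
i.e. there is an injective graph homomorphism from `H` to `G`. -/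
def Contains {V W : Type*} (G : SimpleGraph V) (H : SimpleGraph W) : Prop :=
  ∃ f : H →g G, Function.Injective f

/-- The Turán number `ex(n, H)`: the maximum number of edges of a simple graph on `n`
vertices containing no subgraph isomorphic to `H`. -/
noncomputable def exNum (n : ℕ) {W : Type*} (H : SimpleGraph W) : ℕ :=
  sSup {m : ℕ | ∃ G : SimpleGraph (Fin n), ¬ Contains G H ∧ edgeCount G = m}

/-- The disjoint union of `k` copies of `G`. -/
def copies {V : Type*} (k : ℕ) (G : SimpleGraph V) : SimpleGraph (Fin k × V) where
  Adj u v := u.1 = v.1 ∧ G.Adj u.2 v.2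
  symm.symm u v h := ⟨h.1.symm, G.adj_symm h.2⟩
  loopless.irrefl u h := G.irrefl h.2

/-- The join `G ∨ H` of two graphs: their disjoint union together with all edges
between the two vertex sets. -/
def graphJoin {V W : Type*} (G : SimpleGraph V) (H : SimpleGraph W) : SimpleGraph (V ⊕ W) where
  Adj u v := (G.sum H).Adj u v ∨ (u.isLeft ∧ v.isRight) ∨ (u.isRight ∧ v.isLeft)
  symm.symm u v h := by
    rcases h with h | ⟨h1, h2⟩ | ⟨h1, h2⟩
    · exact Or.inl ((G.sum H).adj_symm h)
    · exact Or.inr (Or.inr ⟨h2, h1⟩)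
    · exact Or.inr (Or.inl ⟨h2, h1⟩)
  loopless.irrefl u := by cases u <;> simp [SimpleGraph.sum]

/-- The star with `m` leaves (a graph on `m + 1` vertices). -/
def starGraph (m : ℕ) : SimpleGraph (Fin 1 ⊕ Fin m) :=
  completeBipartiteGraph (Fin 1) (Fin m)

/-- `K_{ℓk₁+k₂-1} ∨ K̄_{n-ℓk₁-k₂+1}` contains no copy of `k₁ P_{2ℓ} ∪ k₂ S_{2ℓ-1}`. -/
theorem G2_free (ℓ k₁ k₂ n : ℕ) (hℓ : 2 ≤ ℓ) (hk₁ : 1 ≤ k₁)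
    (hn : ℓ * k₁ + k₂ - 1 ≤ n) :
    ¬ Contains
      (graphJoin (⊤ : SimpleGraph (Fin (ℓ * k₁ + k₂ - 1)))
        (⊥ : SimpleGraph (Fin (n - ℓ * k₁ - k₂ + 1))))
      (copies k₁ (pathGraph (2 * ℓ)) ⊕g copies k₂ (_root_.starGraph (2 * ℓ - 1))) := by
  have hlk : 2 ≤ ℓ * k₁ := le_trans hℓ (Nat.le_mul_of_pos_right ℓ hk₁)
  set H := copies k₁ (pathGraph (2 * ℓ)) ⊕g copies k₂ (_root_.starGraph (2 * ℓ - 1)) with hH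
  rintro ⟨f, hf⟩
  -- key: adjacent vertices can't both map to the right part
  have key : ∀ {u v}, H.Adj u v → (f u).isLeft = true ∨ (f v).isLeft = true := by
    intro u v huv
    have hadj := f.map_rel huv
    rcases hx : f u with x | x <;> rcases hy : f v with y | y <;> simp_all [graphJoin, SimpleGraph.sum]
  -- vertex choices
  have h2l : ∀ j : Fin ℓ, 2 * j.val + 1 < 2 * ℓ := fun j => by have := j.isLt; omega
  have h0 : 0 < 2 * ℓ - 1 := by omega
  let u0 : Fin k₁ × Fin ℓ → (Fin k₁ × Fin (2*ℓ)) ⊕ (Fin k₂ × (Fin 1 ⊕ Fin (2*ℓ-1))) :=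
    fun p => Sum.inl (p.1, ⟨2 * p.2.val, by have := h2l p.2; omega⟩)
  let u1 : Fin k₁ × Fin ℓ → (Fin k₁ × Fin (2*ℓ)) ⊕ (Fin k₂ × (Fin 1 ⊕ Fin (2*ℓ-1))) :=
    fun p => Sum.inl (p.1, ⟨2 * p.2.val + 1, h2l p.2⟩)
  let c : Fin k₂ → (Fin k₁ × Fin (2*ℓ)) ⊕ (Fin k₂ × (Fin 1 ⊕ Fin (2*ℓ-1))) :=
    fun s => Sum.inr (s, Sum.inl 0)
  let lf : Fin k₂ → (Fin k₁ × Fin (2*ℓ)) ⊕ (Fin k₂ × (Fin 1 ⊕ Fin (2*ℓ-1))) :=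
    fun s => Sum.inr (s, Sum.inr ⟨0, h0⟩)
  have hadjP : ∀ p, H.Adj (u0 p) (u1 p) := by
    intro p
    show (copies k₁ (pathGraph (2 * ℓ))).Adj _ _
    exact ⟨rfl, pathGraph_adj.2 (Or.inl rfl)⟩
  have hadjS : ∀ s, H.Adj (c s) (lf s) := by
    intro s
    show (copies k₂ (_root_.starGraph (2 * ℓ - 1))).Adj _ _
    exact ⟨rfl, by simp [_root_.starGraph]⟩
  let v : (Fin k₁ × Fin ℓ) ⊕ Fin k₂ → (Fin k₁ × Fin (2*ℓ)) ⊕ (Fin k₂ × (Fin 1 ⊕ Fin (2*ℓ-1))) :=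
    fun x => match x with
    | .inl p => if (f (u0 p)).isLeft then u0 p else u1 p
    | .inr s => if (f (c s)).isLeft then c s else lf s
  have hleft : ∀ x, (f (v x)).isLeft = true := by
    rintro (p | s) <;> simp only [v] <;> split_ifs with h
    · exact h
    · exact (key (hadjP p)).resolve_left h
    · exact h
    · exact (key (hadjS s)).resolve_left h
  have hvinj : Function.Injective v := by
    rintro (p | s) (q | t) h <;> simp only [v] at h <;> split_ifs at h <;>
        simp only [u0, u1, c, lf, Sum.inl.injEq, Sum.inr.injEq, Prod.mk.injEq,
          Fin.mk.injEq, reduceCtorEq, and_true, and_false] at h <;>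
      first
        | exact h.elim
        | (obtain ⟨h1, h2⟩ := h; exact congrArg Sum.inl (Prod.ext h1 (Fin.ext (by omega))))
        | exact congrArg Sum.inr h
        | (obtain ⟨h1, h2⟩ := h; exact congrArg Sum.inr h1)
  let g : (Fin k₁ × Fin ℓ) ⊕ Fin k₂ → Fin (ℓ * k₁ + k₂ - 1) :=
    fun x => (f (v x)).getLeft (hleft x)
  have hginj : Function.Injective g := by
    intro x y h
    obtain ⟨a, ha⟩ := Sum.isLeft_iff.1 (hleft x)
    obtain ⟨b, hb⟩ := Sum.isLeft_iff.1 (hleft y)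
    obtain ⟨_, ha2⟩ := Sum.eq_left_iff_getLeft_eq.mp ha
    obtain ⟨_, hb2⟩ := Sum.eq_left_iff_getLeft_eq.mp hb
    have hab : a = b := ha2 ▸ hb2 ▸ h
    exact hvinj (hf (ha.trans (hab ▸ hb.symm)))
  have hcard := Fintype.card_le_of_injective g hginj
  simp only [Fintype.card_sum, Fintype.card_prod, Fintype.card_fin] at hcard
  rw [Nat.mul_comm] at hcard
  omega
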